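/- Let $\mathfrak{g}$ be a DG-Lie algebra over a field of characteristic 0, $A$ a local Artin algebra with maximal ideal $\mathfrak{m}_A$, and $x\in\mathfrak{g}^1\otimes\mathfrak{m}_A$ a Maurer-Cartan element, i.e., $dx+\frac12[x,x]=0$. Then in $\operatorname{cone}(\operatorname{Id}_{\mathfrak{g}})\otimes\mathfrak{m}_A$ the gauge action satisfies $e^{-\flat x}\ast 0 = x$, i.e., the series $\sum_{n\ge0}\frac{[-\flat x,-]^n}{(n+1)!}(d(\flat x))$ equals $x$. -/

import Mathlib

/-- Let `𝔤` be a DG-Lie algebra over a field of characteristic `0`, tensored with the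
maximal ideal of a local Artin algebra; we model `𝔤 ⊗ 𝔪_A` as a vector space `M` with
(bilinear) bracket `lb`, differential `dM`, whose Maurer-Cartan elements satisfy
`dx + ½[x,x] = 0`.  In `cone(Id_𝔤) ⊗ 𝔪_A`, identified with pairs `(u, ♭w) = (u, w)`,
one has `[♭a, (u, w)] = (0, [a, u])` and `d(♭x) = (x, -dx)`.  The gauge-action series
`∑_{n ≥ 0} [-♭x, -]ⁿ/(n+1)! (d(♭x))` equals `x = (x, 0)`: all terms of index `n ≥ 2`
vanish, so every partial sum with `N ≥ 2` terms equals `(x, 0)`. -/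
theorem stmt_12 {K M : Type*} [Field K] [CharZero K] [AddCommGroup M] [Module K M]
    (lb : M →ₗ[K] M →ₗ[K] M) (dM : M →ₗ[K] M)
    (x : M) (hx : dM x + (2 : K)⁻¹ • lb x x = 0)
    (N : ℕ) (hN : 2 ≤ N) :
    (∑ n ∈ Finset.range N,
        ((Nat.factorial (n + 1) : K))⁻¹ •
          ((fun w : M × M => ((0 : M), lb (-x) w.1))^[n] (x, - dM x))) =
      ((x, 0) : M × M) := by
  set f : M × M → M × M := fun w : M × M => ((0 : M), lb (-x) w.1) with hf
  have hit : ∀ n, 2 ≤ n → f^[n] (x, - dM x) = (0, 0) := by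
    intro n hn
    obtain ⟨k, rfl⟩ := Nat.exists_eq_add_of_le hn
    induction k with
    | zero => simp [f, Function.iterate_succ_apply]
    | succ k ih =>
        rw [show 2 + (k + 1) = (2 + k) + 1 by ring, Function.iterate_succ_apply',
          ih (by omega)]
        simp [f]
  rw [← Finset.sum_subset (Finset.range_subset_range.2 hN)
    (fun n _ hn => by
      rw [hit n (by simp at hn; omega)]
      simp)]
  rw [Finset.sum_range_succ, Finset.sum_range_one]
  simp only [Function.iterate_one, Function.iterate_zero, id_eq, f]
  have h1 : lb (-x) x = - lb x x := by simp
  simp only [h1, Prod.smul_mk, smul_neg, Prod.mk_add_mk, smul_zero, add_zero,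
    Nat.factorial, Nat.cast_ofNat, Nat.cast_one, inv_one, one_smul, ← neg_add]
  have hc : ((Nat.succ 0 * 1 : ℕ) : K)⁻¹ = 1 := by norm_num
  have hc2 : ((Nat.succ 1 * (Nat.succ 0 * 1) : ℕ) : K)⁻¹ = (2 : K)⁻¹ := by norm_num
  rw [hc, one_smul, one_smul, hc2, hx, neg_zero]
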